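/- Let Z ~ N(μ_z, σ_z²) and Y ~ N(0, σ_y²) be independent, σ_z, σ_y > 0. In the Kyle equilibrium with X(Z) = (σ_y/σ_z)(Z − μ_z) and P(v) = μ_z + (σ_z/(2σ_y)) v, the insider's unconditional expected profit equals σ_y σ_z / 2. -/

import Mathlib

open MeasureTheory ProbabilityTheory

open MeasureTheory ProbabilityTheory Real Set
open scoped NNReal ENNReal

namespace KyleAux

lemma gaussPDF0_eq (v : ℝ≥0) (x : ℝ) :
    gaussianPDFReal 0 v x = (Real.sqrt (2 * π * v))⁻¹ * rexp (-(2 * (v : ℝ))⁻¹ * x ^ 2) := by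
  simp only [gaussianPDFReal, sub_zero]
  congr 1
  rw [div_eq_mul_inv]
  ring

lemma integrable_x2_exp {b : ℝ} (hb : 0 < b) :
    Integrable (fun x : ℝ => x ^ 2 * rexp (-b * x ^ 2)) := by
  have h := integrable_rpow_mul_exp_neg_mul_sq hb (s := 2) (by norm_num)
  have : (fun x : ℝ => x ^ (2 : ℝ) * rexp (-b * x ^ 2)) =
      fun x : ℝ => x ^ 2 * rexp (-b * x ^ 2) := by
    ext x
    rw [show (2 : ℝ) = ((2 : ℕ) : ℝ) by norm_num, Real.rpow_natCast]
  rwa [this] at h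

lemma integral_x2_exp {b : ℝ} (hb : 0 < b) :
    ∫ x : ℝ, x ^ 2 * rexp (-b * x ^ 2) = b ^ (-(3 : ℝ) / 2) * Real.sqrt π / 2 := by
  have habs : ∫ x : ℝ, x ^ 2 * rexp (-b * x ^ 2)
      = 2 * ∫ x in Ioi (0 : ℝ), x ^ 2 * rexp (-b * x ^ 2) := by
    rw [← integral_comp_abs (f := fun t => t ^ 2 * rexp (-b * t ^ 2))]
    congr 1 with x
    rw [sq_abs]
  have hrpow : ∫ x in Ioi (0 : ℝ), x ^ 2 * rexp (-b * x ^ 2)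
      = b ^ (-((2 : ℝ) + 1) / 2) * (1 / 2) * Real.Gamma (((2 : ℝ) + 1) / 2) := by
    rw [← integral_rpow_mul_exp_neg_mul_rpow (by norm_num : (0:ℝ) < 2) (by norm_num : (-1:ℝ) < 2) hb]
    congr 1 with x
    rw [show (2 : ℝ) = ((2 : ℕ) : ℝ) by norm_num, Real.rpow_natCast]
  have hG : Real.Gamma (((2 : ℝ) + 1) / 2) = Real.sqrt π / 2 := by
    have : ((2 : ℝ) + 1) / 2 = 1 / 2 + 1 := by norm_num
    rw [this, Real.Gamma_add_one (by norm_num), Real.Gamma_one_half_eq]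
    ring
  rw [habs, hrpow, hG]
  norm_num
  ring_nf


variable {v : ℝ≥0}

lemma sqrt2piv (hv : v ≠ 0) :
    Real.sqrt (2 * π * v) = Real.sqrt (2 * v) * Real.sqrt π := by
  rw [show (2 : ℝ) * π * v = 2 * v * π by ring, Real.sqrt_mul (by positivity)]

lemma integrable_gauss0_sq (hv : v ≠ 0) :
    Integrable (fun x => gaussianPDFReal 0 v x * x ^ 2) := by
  have hvpos : (0 : ℝ) < v := by positivity
  have hb : (0 : ℝ) < (2 * (v : ℝ))⁻¹ := by positivity
  have h := (integrable_x2_exp hb).const_mul (Real.sqrt (2 * π * v))⁻¹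
  refine h.congr ?_
  filter_upwards with x
  rw [gaussPDF0_eq]
  ring

lemma integral_gauss0_sq (hv : v ≠ 0) :
    ∫ x, gaussianPDFReal 0 v x * x ^ 2 = v := by
  have hvpos : (0 : ℝ) < v := by positivity
  have hb : (0 : ℝ) < (2 * (v : ℝ))⁻¹ := by positivity
  have h1 : ∫ x, gaussianPDFReal 0 v x * x ^ 2
      = (Real.sqrt (2 * π * v))⁻¹ * ∫ x, x ^ 2 * rexp (-(2 * (v : ℝ))⁻¹ * x ^ 2) := by
    rw [← integral_const_mul]
    congr 1 with x
    rw [gaussPDF0_eq]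
    ring
  rw [h1, integral_x2_exp hb]
  have hbpow : ((2 * (v : ℝ))⁻¹) ^ (-(3 : ℝ) / 2) = (2 * (v : ℝ)) * Real.sqrt (2 * v) := by
    rw [← Real.rpow_neg_one (2 * (v : ℝ)), ← Real.rpow_mul (by positivity)]
    rw [show (-1 : ℝ) * (-(3:ℝ)/2) = 1 + 1/2 by norm_num]
    rw [Real.rpow_add (by positivity), Real.rpow_one, ← Real.sqrt_eq_rpow]
  rw [hbpow, sqrt2piv hv]
  have h2 : Real.sqrt (2 * (v:ℝ)) ≠ 0 := by positivity
  have h3 : Real.sqrt π ≠ 0 := by positivity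
  field_simp

lemma integrable_gauss0_id (hv : v ≠ 0) :
    Integrable (fun x => gaussianPDFReal 0 v x * x) := by
  have hb : (0 : ℝ) < (2 * (v : ℝ))⁻¹ := by positivity
  have h := (integrable_mul_exp_neg_mul_sq hb).const_mul (Real.sqrt (2 * π * v))⁻¹
  refine h.congr ?_
  filter_upwards with x
  rw [gaussPDF0_eq]
  ring

lemma integral_gauss0_id (v : ℝ≥0) :
    ∫ x, gaussianPDFReal 0 v x * x = 0 := by
  have hodd : ∀ x : ℝ, gaussianPDFReal 0 v (-x) * (-x) = -(gaussianPDFReal 0 v x * x) := by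
    intro x
    rw [gaussPDF0_eq, gaussPDF0_eq]
    ring_nf
  have h := integral_neg_eq_self (fun x => gaussianPDFReal 0 v x * x) (volume : Measure ℝ)
  simp only [hodd, integral_neg] at h
  linarith


lemma pdf_shift (μ : ℝ) (v : ℝ≥0) (x : ℝ) :
    gaussianPDFReal μ v x = gaussianPDFReal 0 v (x - μ) := by
  simp [gaussianPDFReal]

lemma integral_gaussianReal_eq (μ : ℝ) (hv : v ≠ 0) (g : ℝ → ℝ) :
    ∫ x, g x ∂(gaussianReal μ v) = ∫ x, gaussianPDFReal μ v x * g x := by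
  rw [gaussianReal_of_var_ne_zero _ hv, gaussianPDF_def]
  have h : (fun x => ENNReal.ofReal (gaussianPDFReal μ v x))
      = fun x => ((Real.toNNReal (gaussianPDFReal μ v x) : ℝ≥0) : ℝ≥0∞) := rfl
  rw [h, integral_withDensity_eq_integral_smul (measurable_gaussianPDFReal μ v).real_toNNReal g]
  congr 1 with x
  rw [NNReal.smul_def, smul_eq_mul, Real.coe_toNNReal _ (gaussianPDFReal_nonneg _ _ _)]

lemma integrable_gaussianReal_iff (μ : ℝ) (hv : v ≠ 0) (g : ℝ → ℝ) :
    Integrable g (gaussianReal μ v) ↔ Integrable (fun x => gaussianPDFReal μ v x * g x) := by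
  rw [gaussianReal_of_var_ne_zero _ hv, gaussianPDF_def]
  have h : (fun x => ENNReal.ofReal (gaussianPDFReal μ v x))
      = fun x => ((Real.toNNReal (gaussianPDFReal μ v x) : ℝ≥0) : ℝ≥0∞) := rfl
  rw [h, integrable_withDensity_iff_integrable_smul (measurable_gaussianPDFReal μ v).real_toNNReal]
  constructor <;> intro hh <;> refine hh.congr (Filter.Eventually.of_forall fun x => ?_) <;>
    simp only [NNReal.smul_def, smul_eq_mul,
      Real.coe_toNNReal _ (gaussianPDFReal_nonneg _ _ _)]

lemma integrable_sub_sq (μ : ℝ) (hv : v ≠ 0) :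
    Integrable (fun x => (x - μ) ^ 2) (gaussianReal μ v) := by
  rw [integrable_gaussianReal_iff μ hv]
  have h : (fun x : ℝ => gaussianPDFReal μ v x * (x - μ) ^ 2)
      = fun x => (fun y => gaussianPDFReal 0 v y * y ^ 2) (x - μ) := by
    ext x; rw [pdf_shift]
  rw [h]
  exact (integrable_gauss0_sq hv).comp_sub_right μ

lemma integral_sub_sq (μ : ℝ) (hv : v ≠ 0) :
    ∫ x, (x - μ) ^ 2 ∂(gaussianReal μ v) = v := by
  rw [integral_gaussianReal_eq μ hv]
  have h : (fun x : ℝ => gaussianPDFReal μ v x * (x - μ) ^ 2)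
      = fun x => (fun y => gaussianPDFReal 0 v y * y ^ 2) (x - μ) := by
    ext x; rw [pdf_shift]
  rw [h, integral_sub_right_eq_self (fun y => gaussianPDFReal 0 v y * y ^ 2) μ]
  exact integral_gauss0_sq hv

lemma integrable_sub_id (μ : ℝ) (hv : v ≠ 0) :
    Integrable (fun x => x - μ) (gaussianReal μ v) := by
  rw [integrable_gaussianReal_iff μ hv]
  have h : (fun x : ℝ => gaussianPDFReal μ v x * (x - μ))
      = fun x => (fun y => gaussianPDFReal 0 v y * y) (x - μ) := by
    ext x; rw [pdf_shift]
  rw [h]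
  exact (integrable_gauss0_id hv).comp_sub_right μ

lemma integral_sub_id (μ : ℝ) (hv : v ≠ 0) :
    ∫ x, (x - μ) ∂(gaussianReal μ v) = 0 := by
  rw [integral_gaussianReal_eq μ hv]
  have h : (fun x : ℝ => gaussianPDFReal μ v x * (x - μ))
      = fun x => (fun y => gaussianPDFReal 0 v y * y) (x - μ) := by
    ext x; rw [pdf_shift]
  rw [h, integral_sub_right_eq_self (fun y => gaussianPDFReal 0 v y * y) μ]
  exact integral_gauss0_id v

end KyleAux

/-- In the Kyle equilibrium the insider's unconditional expected profit
`E[X(Z)·(Z − P(X(Z)+Y))]` equals `σy σz / 2`. -/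
theorem kyle_insider_expected_profit
    {Ω : Type*} [MeasurableSpace Ω] (μpr : Measure Ω) [IsProbabilityMeasure μpr]
    (Z Y : Ω → ℝ) (hZm : Measurable Z) (hYm : Measurable Y)
    (μz σz σy : ℝ) (hσz : 0 < σz) (hσy : 0 < σy)
    (hZ : Measure.map Z μpr = gaussianReal μz (Real.toNNReal (σz ^ 2)))
    (hY : Measure.map Y μpr = gaussianReal 0 (Real.toNNReal (σy ^ 2)))
    (hindep : IndepFun Z Y μpr)
    (X : ℝ → ℝ) (hX : ∀ z, X z = (σy / σz) * (z - μz))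
    (P : ℝ → ℝ) (hP : ∀ v, P v = μz + (σz / (2 * σy)) * v) :
    (∫ ω, X (Z ω) * (Z ω - P (X (Z ω) + Y ω)) ∂μpr) = σy * σz / 2 := by
  have hσz' : σz ≠ 0 := hσz.ne'
  have hσy' : σy ≠ 0 := hσy.ne'
  have hvz0 : Real.toNNReal (σz ^ 2) ≠ 0 := by
    simp only [ne_eq, Real.toNNReal_eq_zero, not_le]
    positivity
  have hvy0 : Real.toNNReal (σy ^ 2) ≠ 0 := by
    simp only [ne_eq, Real.toNNReal_eq_zero, not_le]
    positivity
  have hvzr : ((Real.toNNReal (σz ^ 2) : ℝ≥0) : ℝ) = σz ^ 2 :=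
    Real.coe_toNNReal _ (sq_nonneg σz)
  have hg2m : Measurable (fun x : ℝ => (x - μz) ^ 2) :=
    (measurable_id.sub_const μz).pow_const 2
  have hg1m : Measurable (fun x : ℝ => x - μz) := measurable_id.sub_const μz
  -- integrability over Ω
  have hInt2 : Integrable (fun ω => (Z ω - μz) ^ 2) μpr := by
    have h := KyleAux.integrable_sub_sq (v := Real.toNNReal (σz ^ 2)) μz hvz0
    rw [← hZ] at h
    exact (integrable_map_measure hg2m.aestronglyMeasurable hZm.aemeasurable).mp h
  have hIntW : Integrable (fun ω => Z ω - μz) μpr := by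
    have h := KyleAux.integrable_sub_id (v := Real.toNNReal (σz ^ 2)) μz hvz0
    rw [← hZ] at h
    exact (integrable_map_measure hg1m.aestronglyMeasurable hZm.aemeasurable).mp h
  have hIntY : Integrable Y μpr := by
    have h := KyleAux.integrable_sub_id (v := Real.toNNReal (σy ^ 2)) 0 hvy0
    simp only [sub_zero] at h
    rw [← hY] at h
    exact (integrable_map_measure measurable_id.aestronglyMeasurable
      hYm.aemeasurable).mp h
  have hindepWY : IndepFun (fun ω => Z ω - μz) Y μpr :=
    hindep.comp (measurable_id.sub_const μz) measurable_id
  have hIntWY : Integrable (fun ω => (Z ω - μz) * Y ω) μpr :=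
    hindepWY.integrable_mul hIntW hIntY
  -- moments
  have hEW2 : ∫ ω, (Z ω - μz) ^ 2 ∂μpr = σz ^ 2 := by
    rw [← integral_map hZm.aemeasurable hg2m.aestronglyMeasurable, hZ,
      KyleAux.integral_sub_sq μz hvz0, hvzr]
  have hEY : ∫ ω, Y ω ∂μpr = 0 := by
    have h1 : ∫ x : ℝ, x ∂(Measure.map Y μpr) = ∫ ω, Y ω ∂μpr :=
      integral_map (f := fun x : ℝ => x) hYm.aemeasurable
        measurable_id.aestronglyMeasurable
    have h0 : ∫ x : ℝ, x ∂(Measure.map Y μpr) = 0 := by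
      rw [hY]
      simpa using KyleAux.integral_sub_id (v := Real.toNNReal (σy ^ 2)) 0 hvy0
    exact h1.symm.trans h0
  have hEWY : ∫ ω, (Z ω - μz) * Y ω ∂μpr = 0 := by
    have h2 : ∫ ω, (Z ω - μz) * Y ω ∂μpr
        = (∫ ω, (Z ω - μz) ∂μpr) * ∫ ω, Y ω ∂μpr :=
      hindepWY.integral_mul_eq_mul_integral hIntW.1 hIntY.1
    rw [h2, hEY, mul_zero]
  -- rewrite the integrand
  have heq : ∀ ω, X (Z ω) * (Z ω - P (X (Z ω) + Y ω))
      = σy / (2 * σz) * (Z ω - μz) ^ 2 - 1 / 2 * ((Z ω - μz) * Y ω) := by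
    intro ω
    rw [hX, hP]
    field_simp
    ring
  calc (∫ ω, X (Z ω) * (Z ω - P (X (Z ω) + Y ω)) ∂μpr)
      = ∫ ω, (σy / (2 * σz) * (Z ω - μz) ^ 2 - 1 / 2 * ((Z ω - μz) * Y ω)) ∂μpr := by
        exact integral_congr_ae (Filter.Eventually.of_forall heq)
    _ = σy / (2 * σz) * ∫ ω, (Z ω - μz) ^ 2 ∂μpr
        - 1 / 2 * ∫ ω, (Z ω - μz) * Y ω ∂μpr := by
        rw [integral_sub (hInt2.const_mul _) (hIntWY.const_mul _),
          integral_const_mul, integral_const_mul]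
    _ = σy * σz / 2 := by
        rw [hEW2, hEWY]
        field_simp
        ring
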